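/- arXiv:2509.00901 — 5 statements merged into one kernel-verified Lean document; each statement's English description precedes it below -/
import Mathlib

section
/- For any positive definite Hermitian matrix E ∈ ℂ^{a×a}, the maximum over positive definite Hermitian matrices Q of log det(Q) − Tr(Q E) + a equals −log det(E), and the maximum is attained at Q = E⁻¹. -/
open Matrix ComplexOrder

-- det of posdef complex matrix is real and positive
lemma detre {n : ℕ} {M : Matrix (Fin n) (Fin n) ℂ} (hM : M.PosDef) :
    0 < M.det.re ∧ M.det = (M.det.re : ℂ) := by
  have h := hM.det_pos
  rw [Complex.lt_def] at h
  refine ⟨by simpa using h.1, ?_⟩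
  exact Complex.ext rfl (by simpa using h.2.symm)

-- trace equals sum of eigenvalues
lemma trace_eq {n : ℕ} {M : Matrix (Fin n) (Fin n) ℂ} (hM : M.IsHermitian) :
    M.trace = ∑ i, (hM.eigenvalues i : ℂ) := by
  conv_lhs => rw [hM.spectral_theorem, Unitary.conjStarAlgAut_apply]
  rw [trace_mul_cycle]
  have h1 : (star hM.eigenvectorUnitary.1 : Matrix (Fin n) (Fin n) ℂ) * hM.eigenvectorUnitary.1 = 1 :=
    Matrix.mem_unitaryGroup_iff'.mp hM.eigenvectorUnitary.2
  rw [h1, Matrix.one_mul, trace_diagonal]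
  rfl

-- key inequality: log det M ≤ trace M - n for posdef M
lemma key {n : ℕ} {M : Matrix (Fin n) (Fin n) ℂ} (hM : M.PosDef) :
    Real.log M.det.re ≤ M.trace.re - n := by
  have hdet : M.det = ∏ i, (hM.1.eigenvalues i : ℂ) := hM.1.det_eq_prod_eigenvalues
  have hdetre : M.det.re = ∏ i, hM.1.eigenvalues i := by
    rw [hdet, ← Complex.ofReal_prod, Complex.ofReal_re]
  have htr : M.trace.re = ∑ i, hM.1.eigenvalues i := by
    rw [trace_eq hM.1, ← Complex.ofReal_sum, Complex.ofReal_re]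
  rw [hdetre, htr, Real.log_prod (fun i _ => (hM.eigenvalues_pos i).ne')]
  have h1 : ∑ i, Real.log (hM.1.eigenvalues i) ≤ ∑ i, (hM.1.eigenvalues i - 1) :=
    Finset.sum_le_sum fun i _ => Real.log_le_sub_one_of_pos (hM.eigenvalues_pos i)
  rw [Finset.sum_sub_distrib] at h1
  simpa using h1

theorem stmt_0 (a : ℕ) (ha : 1 ≤ a) (E : Matrix (Fin a) (Fin a) ℂ) (hE : E.PosDef) :
    IsGreatest {x : ℝ | ∃ Q : Matrix (Fin a) (Fin a) ℂ, Q.PosDef ∧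
        x = Real.log Q.det.re - (Q * E).trace.re + a} (-(Real.log E.det.re)) ∧
      Real.log (E⁻¹).det.re - (E⁻¹ * E).trace.re + a = -(Real.log E.det.re) := by
  obtain ⟨hdE, hdEeq⟩ := detre hE
  have hdetU : IsUnit E.det := hE.det_pos.ne'.isUnit
  have hinv_mul : E⁻¹ * E = 1 := nonsing_inv_mul E hdetU
  have hEinv : (E⁻¹).PosDef := hE.inv
  have hdetinv : (E⁻¹).det.re = (E.det.re)⁻¹ := by
    have h : (E⁻¹).det = (((E.det.re)⁻¹ : ℝ) : ℂ) := by
      rw [det_nonsing_inv, Ring.inverse_eq_inv, hdEeq, Complex.ofReal_inv, Complex.ofReal_re]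
    rw [h, Complex.ofReal_re]
  have heq : Real.log (E⁻¹).det.re - (E⁻¹ * E).trace.re + a = -(Real.log E.det.re) := by
    rw [hdetinv, hinv_mul, Real.log_inv, trace_one]
    simp
  refine ⟨⟨⟨E⁻¹, hEinv, heq.symm⟩, ?_⟩, heq⟩
  rintro x ⟨Q, hQ, rfl⟩
  obtain ⟨hdQ, hdQeq⟩ := detre hQ
  -- set up sqrt
  open MatrixOrder in set S := CFC.sqrt E with hSdef
  have hS2 : S * S = E := open MatrixOrder in CFC.sqrt_mul_sqrt_self E hE.posSemidef.nonneg
  have hSH : S.IsHermitian := open MatrixOrder in (CFC.sqrt_nonneg E).posSemidef.1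
  have hSdet : IsUnit S.det := by
    have : S.det * S.det = E.det := by rw [← det_mul, hS2]
    exact isUnit_of_mul_isUnit_left (this ▸ hdetU)
  set M := S * Q * S with hMdef
  have hMH : M.IsHermitian := by
    unfold Matrix.IsHermitian
    rw [hMdef, conjTranspose_mul, conjTranspose_mul, hSH.eq, hQ.1.eq, Matrix.mul_assoc]
  have hMpd : M.PosDef := by
    refine PosDef.of_dotProduct_mulVec_pos hMH fun x hx => ?_
    have hSx : S *ᵥ x ≠ 0 := by
      intro h
      apply hx
      have := congrArg (S⁻¹ *ᵥ ·) h
      simpa [Matrix.mulVec_mulVec, Matrix.nonsing_inv_mul _ hSdet] using this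
    have hd : star x ⬝ᵥ M *ᵥ x = star (S *ᵥ x) ⬝ᵥ Q *ᵥ (S *ᵥ x) := by
      calc star x ⬝ᵥ M *ᵥ x = star x ⬝ᵥ S *ᵥ (Q *ᵥ (S *ᵥ x)) := by
            rw [hMdef, ← Matrix.mulVec_mulVec, ← Matrix.mulVec_mulVec]
        _ = (star x ᵥ* S) ⬝ᵥ (Q *ᵥ (S *ᵥ x)) := dotProduct_mulVec _ _ _
        _ = star (S *ᵥ x) ⬝ᵥ Q *ᵥ (S *ᵥ x) := by rw [star_mulVec, hSH.eq]
    rw [hd]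
    exact hQ.dotProduct_mulVec_pos hSx
  obtain ⟨hdM, hdMeq⟩ := detre hMpd
  -- det M = det E * det Q
  have hdetM : M.det.re = E.det.re * Q.det.re := by
    have : M.det = E.det * Q.det := by
      rw [hMdef, det_mul, det_mul, mul_comm S.det Q.det, mul_assoc, ← det_mul, hS2, mul_comm]
    have h2 : ((M.det.re : ℂ)) = ((E.det.re * Q.det.re : ℝ) : ℂ) := by
      rw [← hdMeq, this, hdEeq, hdQeq]; simp
    exact_mod_cast h2
  -- trace (Q*E) = trace M
  have htrM : (Q * E).trace = M.trace := by
    rw [hMdef, trace_mul_cycle, hS2, trace_mul_comm]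
  have hkey := key hMpd
  have hlog : Real.log M.det.re = Real.log E.det.re + Real.log Q.det.re := by
    rw [hdetM, Real.log_mul hdE.ne' hdQ.ne']
  rw [htrM]
  linarith [hkey, hlog.symm.le]
end

section
/- Let H ∈ ℂ^{L×M}, W ∈ ℂ^{M×K}, and Q ∈ ℂ^{K×K} Hermitian positive definite. Define E(P, W) = (I_K − P^H H W)(I_K − P^H H W)^H + P^H P for P ∈ ℂ^{L×K}. Then the minimizer of Tr(Q E(P, W)) over P is P* = (I_L + H W W^H H^H)⁻¹ H W. -/
open Matrix ComplexOrder
open scoped MatrixOrder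

lemma trhelp {a b : ℕ} (N : Matrix (Fin a) (Fin b) ℂ) :
    0 ≤ ((Nᴴ * N).trace).re ∧ (((Nᴴ * N).trace).re = 0 → N = 0) := by
  have h : ((Nᴴ * N).trace).re = ∑ j, ∑ i, Complex.normSq (N i j) := by
    simp [Matrix.trace, Matrix.mul_apply, Matrix.diag, Matrix.conjTranspose_apply,
      Complex.re_sum, Complex.normSq_apply, Complex.mul_re]
  constructor
  · rw [h]
    exact Finset.sum_nonneg fun j _ => Finset.sum_nonneg fun i _ => Complex.normSq_nonneg _
  · intro h0
    rw [h] at h0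
    ext i j
    have h1 : ∀ j ∈ Finset.univ, (0:ℝ) ≤ ∑ i, Complex.normSq (N i j) :=
      fun j _ => Finset.sum_nonneg fun i _ => Complex.normSq_nonneg _
    have h2 := (Finset.sum_eq_zero_iff_of_nonneg h1).mp h0 j (Finset.mem_univ j)
    have h3 : ∀ i ∈ Finset.univ, (0:ℝ) ≤ Complex.normSq (N i j) :=
      fun i _ => Complex.normSq_nonneg _
    have h4 := (Finset.sum_eq_zero_iff_of_nonneg h3).mp h2 i (Finset.mem_univ i)
    simpa using Complex.normSq_eq_zero.mp h4

lemma auxid {n k : ℕ} (A Pstar P : Matrix (Fin n) (Fin k) ℂ) (S : Matrix (Fin n) (Fin n) ℂ)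
    (hS : S = 1 + A * Aᴴ) (h1 : S * Pstar = A) (h2 : Pstarᴴ * S = Aᴴ) :
    (1 - Pᴴ * A) * (1 - Pᴴ * A)ᴴ + Pᴴ * P =
      ((1 - Pstarᴴ * A) * (1 - Pstarᴴ * A)ᴴ + Pstarᴴ * Pstar) +
        (P - Pstar)ᴴ * S * (P - Pstar) := by
  have h3 : Aᴴ * Pstar = Pstarᴴ * A := by
    rw [← h2, Matrix.mul_assoc, h1]
  have f1 : A * (Aᴴ * Pstar) = A - Pstar := by
    have : Pstar + A * (Aᴴ * Pstar) = A := by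
      rw [← Matrix.mul_assoc]
      calc Pstar + A * Aᴴ * Pstar = (1 + A * Aᴴ) * Pstar := by
            rw [Matrix.add_mul, Matrix.one_mul]
        _ = A := by rw [← hS, h1]
    linear_combination (norm := abel) this
  have h2' : Pstarᴴ * (A * Aᴴ) = Aᴴ - Pstarᴴ := by
    have h : Pstarᴴ * (1 : Matrix (Fin n) (Fin n) ℂ) + Pstarᴴ * (A * Aᴴ) = Aᴴ := by
      rw [← Matrix.mul_add, ← hS, h2]
    rw [Matrix.mul_one] at h
    linear_combination (norm := abel) h
  have f2 : ∀ X : Matrix (Fin n) (Fin k) ℂ,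
      Pstarᴴ * (A * (Aᴴ * X)) = Aᴴ * X - Pstarᴴ * X := by
    intro X
    rw [← Matrix.mul_assoc A Aᴴ X, ← Matrix.mul_assoc, h2', Matrix.sub_mul]
  subst hS
  simp only [conjTranspose_sub, conjTranspose_mul, conjTranspose_one,
    conjTranspose_conjTranspose, Matrix.sub_mul, Matrix.mul_sub, Matrix.add_mul,
    Matrix.mul_add, Matrix.one_mul, Matrix.mul_one, Matrix.mul_assoc]
  simp only [f2]
  simp only [f1]
  simp only [Matrix.mul_sub, h3]
  abel

theorem stmt_2 (L M K : ℕ) (H : Matrix (Fin L) (Fin M) ℂ) (W : Matrix (Fin M) (Fin K) ℂ)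
    (Q : Matrix (Fin K) (Fin K) ℂ) (hQ : Q.PosDef)
    (Emat : Matrix (Fin L) (Fin K) ℂ → Matrix (Fin K) (Fin K) ℂ)
    (hEmat : ∀ P, Emat P = (1 - Pᴴ * H * W) * (1 - Pᴴ * H * W)ᴴ + Pᴴ * P)
    (Pstar : Matrix (Fin L) (Fin K) ℂ)
    (hPstar : Pstar = (1 + H * W * Wᴴ * Hᴴ)⁻¹ * (H * W)) :
    (∀ P : Matrix (Fin L) (Fin K) ℂ,
        ((Q * Emat Pstar).trace).re ≤ ((Q * Emat P).trace).re) ∧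
      (∀ P : Matrix (Fin L) (Fin K) ℂ,
        ((Q * Emat P).trace).re = ((Q * Emat Pstar).trace).re → P = Pstar) := by
  set A : Matrix (Fin L) (Fin K) ℂ := H * W with hA
  set S : Matrix (Fin L) (Fin L) ℂ := 1 + H * W * Wᴴ * Hᴴ with hSdef
  have hSA : S = 1 + A * Aᴴ := by
    rw [hSdef, hA, conjTranspose_mul, ← Matrix.mul_assoc]
  have hS : S.PosDef := by
    rw [hSA]
    exact Matrix.PosDef.add_posSemidef Matrix.PosDef.one
      (Matrix.posSemidef_self_mul_conjTranspose A)
  have hSdet : IsUnit S.det := (Matrix.isUnit_iff_isUnit_det S).mp hS.isUnit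
  have h1 : S * Pstar = A := by
    rw [hPstar, ← Matrix.mul_assoc, Matrix.mul_nonsing_inv S hSdet, Matrix.one_mul]
  have h2 : Pstarᴴ * S = Aᴴ := by
    have := congrArg conjTranspose h1
    rw [conjTranspose_mul, hS.isHermitian.eq] at this
    exact this
  -- claim
  have claim : ∀ P : Matrix (Fin L) (Fin K) ℂ,
      Emat P = Emat Pstar + (P - Pstar)ᴴ * S * (P - Pstar) := by
    intro P
    rw [hEmat P, hEmat Pstar, Matrix.mul_assoc Pᴴ H W, Matrix.mul_assoc Pstarᴴ H W]
    exact auxid A Pstar P S hSA h1 h2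
  -- square roots
  set T : Matrix (Fin L) (Fin L) ℂ := CFC.sqrt S with hT
  set R : Matrix (Fin K) (Fin K) ℂ := CFC.sqrt Q with hR
  have hTT : T * T = S := CFC.sqrt_mul_sqrt_self S hS.posSemidef.nonneg
  have hRR : R * R = Q := CFC.sqrt_mul_sqrt_self Q hQ.posSemidef.nonneg
  have hTH : Tᴴ = T := (CFC.sqrt_nonneg S).posSemidef.isHermitian.eq
  have hRH : Rᴴ = R := (CFC.sqrt_nonneg Q).posSemidef.isHermitian.eq
  -- key trace identity
  have key : ∀ P : Matrix (Fin L) (Fin K) ℂ,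
      (Q * Emat P).trace = (Q * Emat Pstar).trace +
        ((T * (P - Pstar) * R)ᴴ * (T * (P - Pstar) * R)).trace := by
    intro P
    set D : Matrix (Fin L) (Fin K) ℂ := P - Pstar with hD
    have hNN : (T * D * R)ᴴ * (T * D * R) = R * (Dᴴ * S * D) * R := by
      rw [← hTT]
      simp only [conjTranspose_mul, hTH, hRH, Matrix.mul_assoc]
    rw [claim P, Matrix.mul_add, trace_add, hNN]
    congr 1
    conv_rhs => rw [trace_mul_comm, ← Matrix.mul_assoc, hRR]
  -- invertibility of T and R
  have hTdet : IsUnit T.det := by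
    have h : T.det * T.det = S.det := by rw [← Matrix.det_mul, hTT]
    have h2 := hSdet
    rw [← h] at h2
    exact isUnit_of_mul_isUnit_left h2
  have hQdet : IsUnit Q.det := (Matrix.isUnit_iff_isUnit_det Q).mp hQ.isUnit
  have hRdet : IsUnit R.det := by
    have h : R.det * R.det = Q.det := by rw [← Matrix.det_mul, hRR]
    have h2 := hQdet
    rw [← h] at h2
    exact isUnit_of_mul_isUnit_left h2
  have main : ∀ P : Matrix (Fin L) (Fin K) ℂ,
      ((Q * Emat P).trace).re = ((Q * Emat Pstar).trace).re +
        (((T * (P - Pstar) * R)ᴴ * (T * (P - Pstar) * R)).trace).re := by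
    intro P
    rw [key P, Complex.add_re]
  refine ⟨fun P => ?_, fun P hP => ?_⟩
  · rw [main P]
    exact le_add_of_nonneg_right (trhelp _).1
  · have h0 : (((T * (P - Pstar) * R)ᴴ * (T * (P - Pstar) * R)).trace).re = 0 := by
      have hm := main P
      rw [hP] at hm
      linarith
    have hN := (trhelp _).2 h0
    have hDR : (P - Pstar) * R = 0 := by
      have hc := congrArg (fun X => T⁻¹ * X) hN
      simpa [← Matrix.mul_assoc, Matrix.nonsing_inv_mul T hTdet] using hc
    have hD0 : P - Pstar = 0 := by
      have hc := congrArg (fun X => X * R⁻¹) hDR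
      simpa [Matrix.mul_assoc, Matrix.mul_nonsing_inv R hRdet] using hc
    exact sub_eq_zero.mp hD0
end

section
/- Combining the WMMSE identities: for any H ∈ ℂ^{L×M} and W ∈ ℂ^{M×K}, log det(I_L + H W W^H H^H) = max over Hermitian positive definite Q ∈ ℂ^{K×K} and P ∈ ℂ^{L×K} of [log det(Q) − Tr(Q E(P, W)) + K], where E(P, W) = (I − P^H H W)(I − P^H H W)^H + P^H P. -/
open Matrix ComplexOrder
open scoped MatrixOrder

private lemma trace_re_nonneg' {n : Type*} [Fintype n] [DecidableEq n]
    {A : Matrix n n ℂ} (hA : A.PosSemidef) : 0 ≤ A.trace.re := by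
  have h : ∀ i, 0 ≤ (A i i).re := by
    intro i
    have := hA.re_dotProduct_nonneg (Pi.single i 1)
    simpa [dotProduct, Pi.single_apply, Finset.sum_ite_eq'] using this
  have ht : A.trace.re = ∑ i, (A i i).re := by
    simp [Matrix.trace, Matrix.diag, Complex.re_sum]
  rw [ht]
  exact Finset.sum_nonneg fun i _ => h i

private lemma trace_mul_re_nonneg' {n : Type*} [Fintype n] [DecidableEq n]
    {A B : Matrix n n ℂ} (hA : A.PosSemidef) (hB : B.PosSemidef) :
    0 ≤ (A * B).trace.re := by
  have h1 : CFC.sqrt A * CFC.sqrt A = A := CFC.sqrt_mul_sqrt_self A hA.nonneg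
  have h3 : (CFC.sqrt A)ᴴ = CFC.sqrt A := (CFC.sqrt_nonneg A).posSemidef.isHermitian
  have h2 : (CFC.sqrt A * B * CFC.sqrt A).PosSemidef := by
    have := hB.mul_mul_conjTranspose_same (CFC.sqrt A)
    rwa [h3] at this
  have key : (CFC.sqrt A * B * CFC.sqrt A).trace = (A * B).trace := by
    rw [Matrix.trace_mul_cycle, h1]
  have := trace_re_nonneg' h2
  rwa [key] at this

private lemma log_det_le_trace' {n : Type*} [Fintype n] [DecidableEq n]
    {A : Matrix n n ℂ} (hA : A.PosDef) :
    Real.log A.det.re ≤ A.trace.re - Fintype.card n := by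
  have hdet : A.det.re = ∏ i, hA.1.eigenvalues i := by
    rw [hA.1.det_eq_prod_eigenvalues]
    norm_cast
  have htr : A.trace.re = ∑ i, hA.1.eigenvalues i := by
    have h0 : A.trace = (diagonal (RCLike.ofReal ∘ hA.1.eigenvalues) : Matrix n n ℂ).trace := by
      conv_lhs => rw [hA.1.spectral_theorem]
      rw [Unitary.conjStarAlgAut_apply, Matrix.trace_mul_cycle, Matrix.mem_unitaryGroup_iff'.mp hA.1.eigenvectorUnitary.2,
        Matrix.one_mul]
    rw [h0, Matrix.trace_diagonal]
    simp
  rw [hdet, htr, Real.log_prod (fun i _ => (hA.eigenvalues_pos i).ne')]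
  calc ∑ i, Real.log (hA.1.eigenvalues i)
      ≤ ∑ i, (hA.1.eigenvalues i - 1) :=
        Finset.sum_le_sum fun i _ => Real.log_le_sub_one_of_pos (hA.eigenvalues_pos i)
    _ = (∑ i, hA.1.eigenvalues i) - Fintype.card n := by
        rw [Finset.sum_sub_distrib]
        simp [Finset.card_univ]

private lemma posdef_conj' {n : Type*} [Fintype n] [DecidableEq n]
    {A B : Matrix n n ℂ} (hA : A.PosDef) (hB : IsUnit B.det) :
    (Bᴴ * A * B).PosDef := by
  refine Matrix.PosDef.of_dotProduct_mulVec_pos (Matrix.isHermitian_conjTranspose_mul_mul B hA.1) fun x hx => ?_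
  have hBx : B *ᵥ x ≠ 0 := by
    intro h
    apply hx
    have hinj := Matrix.mulVec_injective_iff_isUnit.mpr ((Matrix.isUnit_iff_isUnit_det B).mpr hB)
    exact hinj (by simpa using h)
  simpa only [star_mulVec, dotProduct_mulVec, vecMul_vecMul] using hA.dotProduct_mulVec_pos hBx

private lemma det_real' {n : Type*} [Fintype n] [DecidableEq n]
    {A : Matrix n n ℂ} (hA : A.PosDef) : A.det = (A.det.re : ℂ) ∧ 0 < A.det.re := by
  have h := hA.det_pos
  rw [RCLike.pos_iff] at h
  obtain ⟨h1, h2⟩ := h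
  refine ⟨Complex.ext (by simp) ?_, by simpa using h1⟩
  simpa using h2

theorem stmt_4 (L M K : ℕ) (H : Matrix (Fin L) (Fin M) ℂ) (W : Matrix (Fin M) (Fin K) ℂ) :
    IsGreatest {x : ℝ | ∃ (Q : Matrix (Fin K) (Fin K) ℂ) (P : Matrix (Fin L) (Fin K) ℂ),
        Q.PosDef ∧ x = Real.log Q.det.re
          - (Q * ((1 - Pᴴ * H * W) * (1 - Pᴴ * H * W)ᴴ + Pᴴ * P)).trace.re + K}
      (Real.log (1 + H * W * Wᴴ * Hᴴ).det.re) := by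
  classical
  have hrw : (1 : Matrix (Fin L) (Fin L) ℂ) + H * W * Wᴴ * Hᴴ = 1 + (H * W) * (H * W)ᴴ := by
    rw [conjTranspose_mul, ← Matrix.mul_assoc]
  rw [hrw]
  set G : Matrix (Fin L) (Fin K) ℂ := H * W with hGdef
  set S : Matrix (Fin L) (Fin L) ℂ := 1 + G * Gᴴ with hSdef
  have hS : S.PosDef := Matrix.PosDef.one.add_posSemidef (posSemidef_self_mul_conjTranspose G)
  haveI := hS.isUnit.invertible
  have h1 : S * S⁻¹ = 1 := Matrix.mul_inv_of_invertible S
  have h2 : S⁻¹ * S = 1 := Matrix.inv_mul_of_invertible S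
  have hc1 : ∀ X : Matrix (Fin L) (Fin K) ℂ, S * (S⁻¹ * X) = X := fun X => by
    rw [← Matrix.mul_assoc, h1, Matrix.one_mul]
  have hc2 : ∀ X : Matrix (Fin L) (Fin K) ℂ, S⁻¹ * (S * X) = X := fun X => by
    rw [← Matrix.mul_assoc, h2, Matrix.one_mul]
  have hSinvH : S⁻¹ᴴ = S⁻¹ := hS.inv.1
  set Pst : Matrix (Fin L) (Fin K) ℂ := S⁻¹ * G with hPstdef
  set Est : Matrix (Fin K) (Fin K) ℂ := 1 - Gᴴ * (S⁻¹ * G) with hEstdef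
  -- key identity
  have key : ∀ P : Matrix (Fin L) (Fin K) ℂ,
      (1 - Pᴴ * H * W) * (1 - Pᴴ * H * W)ᴴ + Pᴴ * P
        = Est + (P - Pst)ᴴ * S * (P - Pst) := by
    intro P
    have hPH : Pᴴ * H * W = Pᴴ * G := by rw [hGdef, Matrix.mul_assoc]
    have hPstH : (P - Pst)ᴴ = Pᴴ - Gᴴ * S⁻¹ := by
      rw [conjTranspose_sub, hPstdef, conjTranspose_mul, hSinvH]
    rw [hPH, hPstH, hEstdef, hPstdef]
    simp only [conjTranspose_sub, conjTranspose_mul, conjTranspose_one,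
      conjTranspose_conjTranspose, Matrix.mul_sub, Matrix.sub_mul, Matrix.mul_one,
      Matrix.one_mul, Matrix.mul_assoc, hc1, hc2]
    rw [hSdef]
    simp only [Matrix.add_mul, Matrix.mul_add, Matrix.one_mul, Matrix.mul_assoc]
    abel
  have hQ0 : (1 + Gᴴ * G).PosDef :=
    Matrix.PosDef.one.add_posSemidef (posSemidef_conjTranspose_mul_self G)
  have hGG : Gᴴ * G = Gᴴ * (S⁻¹ * G) + Gᴴ * (G * (Gᴴ * (S⁻¹ * G))) := by
    calc Gᴴ * G = Gᴴ * (S * (S⁻¹ * G)) := by rw [hc1]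
    _ = _ := by
        rw [hSdef]
        simp only [Matrix.add_mul, Matrix.one_mul, Matrix.mul_add, Matrix.mul_assoc]
  have hQ0E : (1 + Gᴴ * G) * Est = 1 := by
    rw [hEstdef]
    simp only [Matrix.add_mul, Matrix.mul_sub, Matrix.one_mul, Matrix.mul_one, Matrix.mul_assoc]
    rw [hGG]
    abel
  have hEstInv : (1 + Gᴴ * G)⁻¹ = Est := Matrix.inv_eq_right_inv hQ0E
  have hEstPD : Est.PosDef := hEstInv ▸ hQ0.inv
  have hdetQ0 : (1 + Gᴴ * G).det = S.det := by rw [hSdef, Matrix.det_one_add_mul_comm]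
  have hdetES : Est.det * S.det = 1 := by
    have := congrArg Matrix.det hQ0E
    rw [Matrix.det_mul, Matrix.det_one, hdetQ0] at this
    rw [mul_comm]
    exact this
  obtain ⟨hSre, hSpos⟩ := det_real' hS
  obtain ⟨hEre, hEpos⟩ := det_real' hEstPD
  have hes : Est.det.re = (S.det.re)⁻¹ := by
    have : (Est.det.re : ℂ) * (S.det.re : ℂ) = 1 := by rw [← hSre, ← hEre]; exact hdetES
    have h3 : Est.det.re * S.det.re = 1 := by exact_mod_cast this
    field_simp at h3 ⊢
    linarith [h3]
  constructor
  · -- membership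
    refine ⟨1 + Gᴴ * G, Pst, hQ0, ?_⟩
    have hEPst : (1 - Pstᴴ * H * W) * (1 - Pstᴴ * H * W)ᴴ + Pstᴴ * Pst = Est := by
      rw [key Pst]
      simp
    rw [hEPst, hQ0E]
    have : (1 : Matrix (Fin K) (Fin K) ℂ).trace.re = (K : ℝ) := by
      simp [Matrix.trace_one]
    rw [this]
    have : (1 + Gᴴ * G).det.re = S.det.re := by rw [hdetQ0]
    rw [this]
    ring
  · -- upper bound
    rintro x ⟨Q, P, hQ, rfl⟩
    rw [key P]
    set D : Matrix (Fin K) (Fin K) ℂ := (P - Pst)ᴴ * S * (P - Pst) with hDdef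
    have hD : D.PosSemidef := hS.posSemidef.conjTranspose_mul_mul_same (P - Pst)
    have hQD : 0 ≤ (Q * D).trace.re := trace_mul_re_nonneg' hQ.posSemidef hD
    have hsplit : (Q * (Est + D)).trace.re = (Q * Est).trace.re + (Q * D).trace.re := by
      rw [Matrix.mul_add, Matrix.trace_add, Complex.add_re]
    rw [hsplit]
    obtain ⟨hQre, hQpos⟩ := det_real' hQ
    -- conjugated matrix
    set r : Matrix (Fin K) (Fin K) ℂ := CFC.sqrt Est with hrdef
    have hrr : r * r = Est := CFC.sqrt_mul_sqrt_self Est hEstPD.posSemidef.nonneg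
    have hrH : rᴴ = r := (CFC.sqrt_nonneg Est).posSemidef.isHermitian
    have hEdne : Est.det ≠ 0 := by
      intro h
      have : Est.det.re = 0 := by rw [h]; simp
      linarith
    have hrdet : IsUnit r.det := by
      rw [isUnit_iff_ne_zero]
      intro h0
      exact hEdne (by rw [← hrr, Matrix.det_mul, h0, mul_zero])
    have hA : (r * Q * r).PosDef := by
      have := posdef_conj' hQ hrdet
      rwa [hrH] at this
    have hlog := log_det_le_trace' hA
    have hdetA : (r * Q * r).det.re = Q.det.re * Est.det.re := by
      have : (r * Q * r).det = Q.det * Est.det := by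
        rw [Matrix.det_mul, Matrix.det_mul, ← hrr, Matrix.det_mul]
        ring
      rw [this, hQre, hEre]
      norm_cast
    have htrA : (r * Q * r).trace = (Q * Est).trace := by
      rw [Matrix.trace_mul_cycle, hrr, Matrix.trace_mul_comm]
    rw [hdetA, htrA] at hlog
    simp only [Fintype.card_fin] at hlog
    rw [Real.log_mul hQpos.ne' hEpos.ne', hes, Real.log_inv] at hlog
    have hfin : Real.log Q.det.re - (Q * Est).trace.re + (K : ℝ) ≤ Real.log S.det.re := by
      linarith
    linarith
end

section
/- Let A ∈ ℂ^{M×M} be Hermitian positive semidefinite and B ∈ ℂ^{M×K}. Define g(μ) = Tr(W*(μ) W*(μ)^H) where W*(μ) = (A + μ I_M)⁻¹ B for μ > 0. Then g is monotonically non-increasing on (0, ∞). -/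
open Matrix ComplexOrder

lemma trace_re_nonneg {n : Type*} [Fintype n] [DecidableEq n] {M : Matrix n n ℂ} (h : M.PosSemidef) :
    0 ≤ M.trace.re := by
  rw [Matrix.trace]
  rw [Complex.re_sum]
  apply Finset.sum_nonneg
  intro i _
  have := h.re_dotProduct_nonneg (Pi.single i 1)
  simpa [dotProduct, Matrix.mulVec, Pi.single_apply, Finset.sum_ite_eq] using this

lemma inv_shift_eq {M : ℕ} {A : Matrix (Fin M) (Fin M) ℂ} (hA : A.PosSemidef)
    {μ : ℝ} (hμ : 0 < μ) :
    (A + (μ : ℂ) • (1 : Matrix (Fin M) (Fin M) ℂ))⁻¹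
      = (hA.1.eigenvectorUnitary : Matrix (Fin M) (Fin M) ℂ)
        * diagonal (fun i => (((hA.1.eigenvalues i + μ)⁻¹ : ℝ) : ℂ))
        * star (hA.1.eigenvectorUnitary : Matrix (Fin M) (Fin M) ℂ) := by
  set U : Matrix (Fin M) (Fin M) ℂ := (hA.1.eigenvectorUnitary : Matrix (Fin M) (Fin M) ℂ)
  have hUU : star U * U = 1 := Matrix.mem_unitaryGroup_iff'.mp (hA.1.eigenvectorUnitary).2
  have hUU' : U * star U = 1 := Matrix.mem_unitaryGroup_iff.mp (hA.1.eigenvectorUnitary).2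
  have hne : ∀ i, ((hA.1.eigenvalues i + μ : ℝ) : ℂ) ≠ 0 := by
    intro i
    have := hA.eigenvalues_nonneg i
    exact_mod_cast ne_of_gt (by positivity : (0:ℝ) < hA.1.eigenvalues i + μ)
  have hshift : A + (μ : ℂ) • (1 : Matrix (Fin M) (Fin M) ℂ)
      = U * diagonal (fun i => ((hA.1.eigenvalues i + μ : ℝ) : ℂ)) * star U := by
    conv_lhs => rw [hA.1.spectral_theorem, Unitary.conjStarAlgAut_apply]
    have h1 : (μ : ℂ) • (1 : Matrix (Fin M) (Fin M) ℂ)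
        = U * ((μ : ℂ) • (1 : Matrix (Fin M) (Fin M) ℂ)) * star U := by
      rw [mul_smul_comm, mul_one, smul_mul_assoc, hUU']
    rw [h1, ← add_mul, ← mul_add]
    congr 2
    ext i j
    rcases eq_or_ne i j with rfl | hij
    · simp only [Matrix.add_apply, Matrix.diagonal_apply_eq, Matrix.smul_apply,
        Matrix.one_apply_eq, Function.comp, smul_eq_mul, mul_one, RCLike.ofReal]
      push_cast
      norm_num [add_comm]
    · simp [hij]
  apply inv_eq_right_inv
  rw [hshift]
  set Dg := diagonal (fun i => ((hA.1.eigenvalues i + μ : ℝ) : ℂ)) with hDg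
  set Dh := diagonal (fun i => (((hA.1.eigenvalues i + μ)⁻¹ : ℝ) : ℂ)) with hDh
  simp only [mul_assoc]
  rw [show star U * (U * (Dh * star U)) = Dh * star U by rw [← mul_assoc, hUU, one_mul]]
  rw [show Dg * (Dh * star U) = star U by
    rw [← mul_assoc, hDg, hDh, diagonal_mul_diagonal]
    have : (fun i => ((hA.1.eigenvalues i + μ : ℝ) : ℂ) * (((hA.1.eigenvalues i + μ)⁻¹ : ℝ) : ℂ))
        = fun _ => (1:ℂ) := by
      funext i
      rw [← Complex.ofReal_mul, mul_inv_cancel₀]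
      · simp
      · intro h; exact hne i (by exact_mod_cast congrArg (Complex.ofReal) h)
    rw [this, diagonal_one, one_mul]]
  exact hUU'

theorem stmt_6 (M K : ℕ) (A : Matrix (Fin M) (Fin M) ℂ) (hA : A.PosSemidef)
    (B : Matrix (Fin M) (Fin K) ℂ)
    (g : ℝ → ℝ)
    (hg : ∀ μ : ℝ, g μ =
      ((((A + (μ : ℂ) • (1 : Matrix (Fin M) (Fin M) ℂ))⁻¹ * B)
        * ((A + (μ : ℂ) • (1 : Matrix (Fin M) (Fin M) ℂ))⁻¹ * B)ᴴ).trace).re) :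
    AntitoneOn g (Set.Ioi (0 : ℝ)) := by
  intro μ₁ hμ₁ μ₂ hμ₂ h12
  simp only [Set.mem_Ioi] at hμ₁ hμ₂
  set U : Matrix (Fin M) (Fin M) ℂ := (hA.1.eigenvectorUnitary : Matrix (Fin M) (Fin M) ℂ)
    with hUdef
  have hUU : Uᴴ * U = 1 := Matrix.mem_unitaryGroup_iff'.mp (hA.1.eigenvectorUnitary).2
  set lam := hA.1.eigenvalues with hlam
  set X : Matrix (Fin M) (Fin K) ℂ := Uᴴ * B with hX
  have key : ∀ μ : ℝ, 0 < μ → g μ =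
      ((Xᴴ * diagonal (fun i => ((((lam i + μ)⁻¹) ^ 2 : ℝ) : ℂ)) * X).trace).re := by
    intro μ hμ
    rw [hg, inv_shift_eq hA hμ, trace_mul_comm]
    rw [Matrix.star_eq_conjTranspose]
    set d : Fin M → ℂ := fun i => (((lam i + μ)⁻¹ : ℝ) : ℂ) with hd
    have hDh : (diagonal d)ᴴ = diagonal d := by
      rw [diagonal_conjTranspose]
      have : star d = d := by
        funext i
        simp only [hd, Pi.star_apply]
        exact Complex.conj_ofReal _
      rw [this]
    have hdd : diagonal d * diagonal d
        = diagonal (fun i => ((((lam i + μ)⁻¹) ^ 2 : ℝ) : ℂ)) := by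
      rw [diagonal_mul_diagonal]
      have : (fun i => d i * d i) = fun i => ((((lam i + μ)⁻¹) ^ 2 : ℝ) : ℂ) := by
        funext i
        simp only [hd]
        push_cast
        ring
      rw [this]
    congr 2
    simp only [conjTranspose_mul, conjTranspose_conjTranspose, hDh, Matrix.mul_assoc, hX]
    rw [show Uᴴ * (U * (diagonal d * (Uᴴ * B))) = diagonal d * (Uᴴ * B) by
      rw [← Matrix.mul_assoc, hUU, Matrix.one_mul]]
    rw [← Matrix.mul_assoc (diagonal d), hdd]
  rw [key μ₁ hμ₁, key μ₂ hμ₂]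
  have hdiff : (Xᴴ * diagonal (fun i => ((((lam i + μ₁)⁻¹) ^ 2 : ℝ) : ℂ)) * X)
      - (Xᴴ * diagonal (fun i => ((((lam i + μ₂)⁻¹) ^ 2 : ℝ) : ℂ)) * X)
      = Xᴴ * diagonal (fun i => (((((lam i + μ₁)⁻¹) ^ 2 - ((lam i + μ₂)⁻¹) ^ 2 : ℝ)) : ℂ)) * X := by
    rw [← Matrix.sub_mul, ← Matrix.mul_sub, diagonal_sub]
    have : (fun i => (((((lam i + μ₁)⁻¹) ^ 2 : ℝ)) : ℂ) - ((((lam i + μ₂)⁻¹) ^ 2 : ℝ) : ℂ))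
        = fun i => (((((lam i + μ₁)⁻¹) ^ 2 - ((lam i + μ₂)⁻¹) ^ 2 : ℝ)) : ℂ) := by
      funext i
      push_cast
      ring
    rw [this]
  have hpsd : (Xᴴ * diagonal
      (fun i => (((((lam i + μ₁)⁻¹) ^ 2 - ((lam i + μ₂)⁻¹) ^ 2 : ℝ)) : ℂ)) * X).PosSemidef := by
    apply Matrix.PosSemidef.conjTranspose_mul_mul_same
    rw [posSemidef_diagonal_iff]
    intro i
    rw [Complex.zero_le_real]
    have h0 : (0:ℝ) < lam i + μ₁ := by
      have := hA.eigenvalues_nonneg i; positivity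
    have hle : (lam i + μ₂)⁻¹ ≤ (lam i + μ₁)⁻¹ :=
      inv_anti₀ h0 (by linarith)
    have hpos : 0 ≤ (lam i + μ₂)⁻¹ := by
      have : (0:ℝ) < lam i + μ₂ := by linarith
      positivity
    nlinarith
  have := trace_re_nonneg hpsd
  rw [← hdiff, Matrix.trace_sub, Complex.sub_re] at this
  linarith
end

section
/- For Hermitian positive semidefinite S ∈ ℂ^{n×n} and a contraction T ∈ ℂ^{m×n} (i.e., T T^H ⪯ I_m), one has det(I_m + T S T^H) ≤ det(I_n + S). -/
open Matrix ComplexOrder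
open scoped MatrixOrder

section Aux

variable {k : Type*} [Fintype k] [DecidableEq k]

lemma dot_self_eigenvectorBasis {A : Matrix k k ℂ} (hA : A.IsHermitian) (i : k) :
    star ⇑(hA.eigenvectorBasis i) ⬝ᵥ ⇑(hA.eigenvectorBasis i) = 1 := by
  have h := EuclideanSpace.inner_eq_star_dotProduct (hA.eigenvectorBasis i) (hA.eigenvectorBasis i)
  rw [inner_self_eq_norm_sq_to_K, hA.eigenvectorBasis.orthonormal.1 i] at h
  simpa [dotProduct_comm] using h.symm

/-- If `P` is PSD and `P - P^2` is PSD, then `1 - P` is PSD. -/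
lemma one_sub_posSemidef {P : Matrix k k ℂ} (hP : P.PosSemidef)
    (h2 : (P - P * P).PosSemidef) : ((1 : Matrix k k ℂ) - P).PosSemidef := by
  have hle : ∀ i, hP.1.eigenvalues i ≤ 1 := by
    intro i
    set v := ⇑(hP.1.eigenvectorBasis i) with hv
    set t := hP.1.eigenvalues i with htdef
    have hPv : P *ᵥ v = (t : ℝ) • v := hP.1.mulVec_eigenvectorBasis i
    have hvv : star v ⬝ᵥ v = 1 := dot_self_eigenvectorBasis hP.1 i
    have key : star v ⬝ᵥ ((P - P * P) *ᵥ v) = ((t - t^2 : ℝ) : ℂ) := by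
      rw [sub_mulVec, ← mulVec_mulVec, hPv, mulVec_smul, hPv, dotProduct_sub]
      rw [dotProduct_smul, smul_smul, dotProduct_smul, hvv]
      simp [Complex.real_smul]
      ring
    have h0 := h2.dotProduct_mulVec_nonneg v
    rw [key] at h0
    have h1 : (0:ℝ) ≤ t - t^2 := by exact_mod_cast h0
    nlinarith [hP.eigenvalues_nonneg i]
  set U : Matrix k k ℂ := ↑hP.1.eigenvectorUnitary with hU
  have hUU : U * star U = 1 := Unitary.mul_star_self_of_mem hP.1.eigenvectorUnitary.2
  have heq : (1 : Matrix k k ℂ) - P =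
      U * ((1 : Matrix k k ℂ) - diagonal (RCLike.ofReal ∘ hP.1.eigenvalues)) * star U := by
    rw [Matrix.mul_sub, Matrix.sub_mul, Matrix.mul_one, hUU]
    congr 1
    exact hP.1.spectral_theorem
  have hd : ((1 : Matrix k k ℂ) - diagonal (RCLike.ofReal ∘ hP.1.eigenvalues)).PosSemidef := by
    rw [← diagonal_one, diagonal_sub]
    refine posSemidef_diagonal_iff.mpr fun i => ?_
    have h9 : ((RCLike.ofReal ∘ hP.1.eigenvalues) i : ℂ) = ((hP.1.eigenvalues i : ℝ) : ℂ) := rfl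
    rw [h9, show (1:ℂ) = ((1:ℝ):ℂ) from rfl, ← Complex.ofReal_sub]
    exact_mod_cast sub_nonneg.mpr (hle i)
  rw [heq, star_eq_conjTranspose U]
  exact hd.mul_mul_conjTranspose_same U

/-- The determinant of `1 + C` for `C` PSD is a real number at least `1`. -/
lemma det_one_add_psd {C : Matrix k k ℂ} (hC : C.PosSemidef) :
    ∃ r : ℝ, 1 ≤ r ∧ (1 + C).det = (r : ℂ) := by
  have hH : ((1 : Matrix k k ℂ) + C).IsHermitian := isHermitian_one.add hC.1
  refine ⟨∏ i, hH.eigenvalues i, ?_, ?_⟩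
  · calc (1 : ℝ) = ∏ _i : k, 1 := by simp
    _ ≤ ∏ i, hH.eigenvalues i := by
        refine Finset.prod_le_prod (by intros; norm_num) (fun i _ => ?_)
        rw [hH.eigenvalues_eq]
        have hd := dot_self_eigenvectorBasis hH i
        rw [add_mulVec, one_mulVec, dotProduct_add, hd, map_add]
        have := hC.re_dotProduct_nonneg ⇑(hH.eigenvectorBasis i)
        simpa using this
  · rw [hH.det_eq_prod_eigenvalues]
    push_cast
    rfl

/-- Monotonicity of the determinant: adding a PSD matrix increases `det (1 + X)`. -/
lemma det_re_mono {X N : Matrix k k ℂ} (hX : X.PosSemidef) (hN : N.PosSemidef) :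
    (1 + X).det.re ≤ (1 + X + N).det.re := by
  obtain ⟨r, hr, hdet⟩ := det_one_add_psd hX
  have hA : ((1 : Matrix k k ℂ) + X).PosSemidef := Matrix.PosSemidef.one.add hX
  set Q := CFC.sqrt (1 + X) with hQdef
  have hQ : Q.PosSemidef := (CFC.sqrt_nonneg _).posSemidef
  have hQQ : Q * Q = 1 + X := CFC.sqrt_mul_sqrt_self _ hA.nonneg
  have hdetQ : Q.det * Q.det = (r : ℂ) := by rw [← det_mul, hQQ, hdet]
  have hQunit : IsUnit Q.det := by
    refine isUnit_iff_ne_zero.mpr fun h => ?_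
    rw [h, zero_mul] at hdetQ
    have : (r:ℂ) ≠ 0 := by exact_mod_cast (by linarith : r ≠ 0)
    exact this hdetQ.symm
  have hinv : Q * Q⁻¹ = 1 := mul_nonsing_inv Q hQunit
  have hinv' : Q⁻¹ * Q = 1 := nonsing_inv_mul Q hQunit
  set C := Q⁻¹ * N * (Q⁻¹)ᴴ with hCdef
  have hC : C.PosSemidef := hN.mul_mul_conjTranspose_same Q⁻¹
  have hQH : Qᴴ = Q := hQ.1
  have hQiH : (Q⁻¹)ᴴ = Q⁻¹ := by rw [conjTranspose_nonsing_inv, hQH]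
  have hsplit : 1 + X + N = Q * (1 + C) * Q := by
    rw [Matrix.mul_add, Matrix.add_mul, Matrix.mul_one, hQQ, hCdef, hQiH]
    congr 1
    rw [← Matrix.mul_assoc, ← Matrix.mul_assoc, hinv, Matrix.one_mul, Matrix.mul_assoc,
      hinv', Matrix.mul_one]
  obtain ⟨s, hs, hdetC⟩ := det_one_add_psd hC
  have : (1 + X + N).det = ((r * s : ℝ) : ℂ) := by
    rw [hsplit, det_mul, det_mul, hdetC, mul_comm Q.det, mul_assoc, hdetQ]
    push_cast
    ring
  rw [this, hdet]
  simp only [Complex.ofReal_re]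
  nlinarith

end Aux

theorem stmt_19 (n m : ℕ) (S : Matrix (Fin n) (Fin n) ℂ) (hS : S.PosSemidef)
    (T : Matrix (Fin m) (Fin n) ℂ)
    (hT : ((1 : Matrix (Fin m) (Fin m) ℂ) - T * Tᴴ).PosSemidef) :
    (1 + T * S * Tᴴ).det.re ≤ (1 + S).det.re := by
  set R := CFC.sqrt S with hRdef
  have hR : R.PosSemidef := (CFC.sqrt_nonneg _).posSemidef
  have hRH : Rᴴ = R := hR.1
  have hRR : R * R = S := CFC.sqrt_mul_sqrt_self _ hS.nonneg
  set P : Matrix (Fin n) (Fin n) ℂ := Tᴴ * T with hPdef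
  have hP : P.PosSemidef := posSemidef_conjTranspose_mul_self T
  have hPP : (P - P * P).PosSemidef := by
    have h := hT.conjTranspose_mul_mul_same T
    have heq : Tᴴ * ((1 : Matrix (Fin m) (Fin m) ℂ) - T * Tᴴ) * T = P - P * P := by
      rw [Matrix.mul_sub, Matrix.mul_one, Matrix.sub_mul, hPdef]
      simp [Matrix.mul_assoc]
    rwa [heq] at h
  have hK : ((1 : Matrix (Fin n) (Fin n) ℂ) - P).PosSemidef := one_sub_posSemidef hP hPP
  set X : Matrix (Fin n) (Fin n) ℂ := (T * R)ᴴ * (T * R) with hXdef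
  have hX : X.PosSemidef := posSemidef_conjTranspose_mul_self (T * R)
  set N : Matrix (Fin n) (Fin n) ℂ := Rᴴ * ((1 : Matrix (Fin n) (Fin n) ℂ) - P) * R with hNdef
  have hN : N.PosSemidef := hK.conjTranspose_mul_mul_same R
  have hXN : X + N = S := by
    have hXeq : X = Rᴴ * P * R := by
      rw [hXdef, hPdef, conjTranspose_mul]
      simp [Matrix.mul_assoc]
    rw [hXeq, hNdef, Matrix.mul_sub, Matrix.sub_mul, Matrix.mul_one, hRH, hRR, add_comm,
      sub_add_cancel]
  have hTS : T * S * Tᴴ = (T * R) * (T * R)ᴴ := by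
    rw [conjTranspose_mul, hRH, ← hRR]
    simp [Matrix.mul_assoc]
  calc (1 + T * S * Tᴴ).det.re = (1 + X).det.re := by
        rw [hTS, det_one_add_mul_comm, hXdef]
    _ ≤ (1 + X + N).det.re := det_re_mono hX hN
    _ = (1 + S).det.re := by rw [add_assoc, hXN]
end
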